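/- In the roundabout exploration model, for every t ∈ [N], the sum of the sizes of the visited-state sets of the active agents satisfies ∑_{a_i ∈ A(t)} |D_i(t)| ≤ 2N − |A(t)|. -/

import Mathlib

/-- The circular interval `⟨i, j⟩` on `Fin N`: all states encountered when moving
forward from `i` to `j` along the cycle `(0, 1, …, N-1, 0)`. -/
def cInt {N : ℕ} (i j : Fin N) : Set (Fin N) := {x | (x - i).val ≤ (j - i).val}

/-- The half-open circular interval `⟨i, j)` on `Fin N`, which excludes the right
endpoint `j`. -/
def cIntHalf {N : ℕ} (i j : Fin N) : Set (Fin N) := cInt i j \ {j}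

/-- The roundabout exploration model on the state set `Fin N`:
`avail t` is the set of positions available at step `t` (steps `t = 1, …, N` are
relevant), `state i t` is the state of agent `a_i` after step `t`, and `active t`
is the set of (indices of) active agents after step `t`. Agent `a_i` starts at
state `i`, moves forward one position (cyclically) at step `t` whenever its
current position is available, and stays put otherwise. Active agents satisfy:
initially all agents are active, the active sets are decreasing, elimination
preserves coverage of visited states, and every active agent is non-redundant. -/
structure Roundabout (N : ℕ) [NeZero N] where
  avail : ℕ → Set (Fin N)
  state : Fin N → ℕ → Fin N
  active : ℕ → Set (Fin N)
  state_zero : ∀ i, state i 0 = i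
  state_succ_of_mem : ∀ i t, state i t ∈ avail (t + 1) → state i (t + 1) = state i t + 1
  state_succ_of_not_mem : ∀ i t, state i t ∉ avail (t + 1) → state i (t + 1) = state i t
  active_zero : active 0 = Set.univ
  active_mono : ∀ t, active (t + 1) ⊆ active t
  active_cover : ∀ t, (⋃ j ∈ active (t + 1), cInt j (state j (t + 1)))
      = ⋃ j ∈ active t, cInt j (state j (t + 1))
  active_nonredundant : ∀ t, ∀ i ∈ active (t + 1),
      ¬ cInt i (state i (t + 1)) ⊆ ⋃ j ∈ active (t + 1) \ {i}, cInt j (state j (t + 1))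

/-- `D_i(t)`, the set of states visited by agent `a_i` up to step `t`. -/
def Roundabout.visited {N : ℕ} [NeZero N] (R : Roundabout N) (i : Fin N) (t : ℕ) :
    Set (Fin N) := cInt i (R.state i t)

/-- The roundabout model is `k`-deficient: at every step `t ∈ [N]`, at most `2k`
positions are unavailable. -/
def Roundabout.KDeficient {N : ℕ} [NeZero N] (R : Roundabout N) (k : ℕ) : Prop :=
  ∀ t : ℕ, 1 ≤ t → t ≤ N → ((R.avail t)ᶜ : Set (Fin N)).ncard ≤ 2 * k

section Aux

variable {N : ℕ} [NeZero N]

omit [NeZero N] in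
lemma mem_cInt {i j x : Fin N} : x ∈ cInt i j ↔ (x - i).val ≤ (j - i).val := Iff.rfl

lemma cInt_shift_val (y i j : Fin N) : (y - j).val = ((y - i).val + (i - j).val) % N := by
  rw [show y - j = (y - i) + (i - j) by abel, Fin.val_add]

omit [NeZero N] in
lemma cInt_sub_val' (a b : Fin N) : (a - b).val = (N - b.val + a.val) % N := by
  rw [Fin.sub_def]

lemma cInt_sub_val_le {x i j : Fin N} (h : (x - i).val ≤ (x - j).val) :
    (i - j).val = (x - j).val - (x - i).val := by
  have h1 : (x - i).val < N := (x - i).isLt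
  have h2 : (x - j).val < N := (x - j).isLt
  rw [show i - j = (x - j) - (x - i) by abel, cInt_sub_val',
    show N - (x - i).val + (x - j).val = N + ((x - j).val - (x - i).val) by omega,
    Nat.add_mod_left, Nat.mod_eq_of_lt (by omega)]

lemma cInt_sub_val_gt {x i j : Fin N} (h : (x - j).val < (x - i).val) :
    (i - j).val = N - ((x - i).val - (x - j).val) := by
  have h1 : (x - i).val < N := (x - i).isLt
  have h2 : (x - j).val < N := (x - j).isLt
  rw [show i - j = (x - j) - (x - i) by abel, cInt_sub_val',
    Nat.mod_eq_of_lt (by omega)]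
  omega

lemma cInt_ncard (i j : Fin N) : (cInt i j).ncard = (j - i).val + 1 := by
  have hinj : Set.InjOn (fun x : Fin N => (x - i).val) (cInt i j) := by
    intro a _ b _ h
    have : a - i = b - i := Fin.val_injective h
    exact sub_left_injective this
  have himg : (fun x : Fin N => (x - i).val) '' cInt i j = Set.Iic (j - i).val := by
    ext c
    constructor
    · rintro ⟨x, hx, rfl⟩
      exact hx
    · intro hc
      have hc' : c ≤ (j - i).val := hc
      have hcN : c < N := lt_of_le_of_lt hc' (j - i).isLt
      refine ⟨i + ⟨c, hcN⟩, ?_, ?_⟩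
      · show ((i + ⟨c, hcN⟩) - i).val ≤ (j - i).val
        rw [add_sub_cancel_left]
        exact hc'
      · show ((i + ⟨c, hcN⟩) - i).val = c
        rw [add_sub_cancel_left]
  calc (cInt i j).ncard = ((fun x : Fin N => (x - i).val) '' cInt i j).ncard :=
        (Set.ncard_image_of_injOn hinj).symm
    _ = (j - i).val + 1 := by
        rw [himg, ← Finset.coe_Iic, Set.ncard_coe_finset, Nat.card_Iic]

/-- If three circular arcs share a common point `x`, and their left endpoints
are ordered as `i1, i2, i3` (by distance backwards from `x`), then either the
third arc is contained in the second, or the second is contained in the union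
of the first and third. -/
lemma three_arcs {x i1 i2 i3 a1 a2 a3 : Fin N}
    (h21 : (x - i2).val < (x - i1).val) (h32 : (x - i3).val < (x - i2).val)
    (h1 : x ∈ cInt i1 a1) (h2 : x ∈ cInt i2 a2) (h3 : x ∈ cInt i3 a3) :
    cInt i3 a3 ⊆ cInt i2 a2 ∨ cInt i2 a2 ⊆ cInt i1 a1 ∪ cInt i3 a3 := by
  have hm1 : (x - i1).val ≤ (a1 - i1).val := h1
  have hm2 : (x - i2).val ≤ (a2 - i2).val := h2
  have hm3 : (x - i3).val ≤ (a3 - i3).val := h3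
  have hd1 : (a1 - i1).val < N := (a1 - i1).isLt
  have hd2 : (a2 - i2).val < N := (a2 - i2).isLt
  have hd3 : (a3 - i3).val < N := (a3 - i3).isLt
  by_cases hr : (a3 - i3).val - (x - i3).val ≤ (a2 - i2).val - (x - i2).val
  · left
    intro y hy
    have hy' : (y - i3).val ≤ (a3 - i3).val := hy
    show (y - i2).val ≤ (a2 - i2).val
    rw [cInt_shift_val y i3 i2, cInt_sub_val_le (le_of_lt h32),
      Nat.mod_eq_of_lt (by omega)]
    omega
  · right
    intro y hy
    have hy' : (y - i2).val ≤ (a2 - i2).val := hy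
    have hyN : (y - i2).val < N := (y - i2).isLt
    by_cases hc : (y - i2).val + ((x - i1).val - (x - i2).val) ≤ (a1 - i1).val
    · left
      show (y - i1).val ≤ (a1 - i1).val
      rw [cInt_shift_val y i2 i1, cInt_sub_val_le (le_of_lt h21),
        Nat.mod_eq_of_lt (by omega)]
      exact hc
    · right
      show (y - i3).val ≤ (a3 - i3).val
      rw [cInt_shift_val y i2 i3, cInt_sub_val_gt h32,
        show (y - i2).val + (N - ((x - i2).val - (x - i3).val))
          = N + ((y - i2).val - ((x - i2).val - (x - i3).val)) by omega,
        Nat.add_mod_left, Nat.mod_eq_of_lt (by omega)]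
      omega

/-- No point is covered by three distinct active (hence non-redundant) agents. -/
lemma no_three (R : Roundabout N) (t' : ℕ) (x i1 i2 i3 : Fin N)
    (hm1 : i1 ∈ R.active (t' + 1)) (hm2 : i2 ∈ R.active (t' + 1))
    (hm3 : i3 ∈ R.active (t' + 1))
    (h1 : x ∈ R.visited i1 (t' + 1)) (h2 : x ∈ R.visited i2 (t' + 1))
    (h3 : x ∈ R.visited i3 (t' + 1))
    (h21 : (x - i2).val < (x - i1).val) (h32 : (x - i3).val < (x - i2).val) : False := by
  have hne12 : i1 ≠ i2 := by rintro rfl; omega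
  have hne23 : i2 ≠ i3 := by rintro rfl; omega
  rcases three_arcs h21 h32 h1 h2 h3 with h | h
  · refine R.active_nonredundant t' i3 hm3 (h.trans ?_)
    exact Set.subset_biUnion_of_mem (u := fun j => cInt j (R.state j (t' + 1)))
      (show i2 ∈ R.active (t' + 1) \ {i3} from ⟨hm2, hne23⟩)
  · refine R.active_nonredundant t' i2 hm2 ?_
    intro y hy
    rcases h hy with h' | h'
    · exact Set.mem_biUnion (show i1 ∈ R.active (t' + 1) \ {i2} from ⟨hm1, hne12⟩) h'
    · exact Set.mem_biUnion
        (show i3 ∈ R.active (t' + 1) \ {i2} from ⟨hm3, fun hh => hne23 (hh.symm)⟩) h'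

end Aux

/-- **Lemma (sum of visited-state set sizes).** For every `t ∈ [N]`,
`∑_{a_i ∈ A(t)} |D_i(t)| ≤ 2N - |A(t)|`. -/
theorem roundabout_sum_of_states {N : ℕ} [NeZero N] (R : Roundabout N)
    (t : ℕ) (ht1 : 1 ≤ t) (ht : t ≤ N) :
    ∑ i ∈ (R.active t).toFinite.toFinset, (R.visited i t).ncard
      ≤ 2 * N - (R.active t).ncard := by
  classical
  obtain ⟨t', rfl⟩ : ∃ t', t = t' + 1 := ⟨t - 1, by omega⟩
  set T := t' + 1 with hT
  set A : Finset (Fin N) := (R.active T).toFinite.toFinset with hA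
  have hAmem : ∀ i, i ∈ A ↔ i ∈ R.active T := fun i => Set.Finite.mem_toFinset _
  set μ : Fin N → ℕ := fun x => (A.filter fun i => x ∈ R.visited i T).card with hμ
  -- step 1 : double counting
  have hsum : ∑ i ∈ A, (R.visited i T).ncard = ∑ x : Fin N, μ x := by
    have h1 : ∀ i, (R.visited i T).ncard
        = ∑ x : Fin N, if x ∈ R.visited i T then 1 else 0 := by
      intro i
      rw [← Finset.card_filter, Set.ncard_eq_toFinset_card (R.visited i T) (Set.toFinite _)]
      congr 1
      ext x
      simp only [Set.Finite.mem_toFinset, Finset.mem_filter, Finset.mem_univ, true_and]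
    rw [Finset.sum_congr rfl (fun i _ => h1 i), Finset.sum_comm]
    exact Finset.sum_congr rfl (fun x _ => (Finset.card_filter _ _).symm)
  -- step 2 : every point is covered at most twice
  have hμ2 : ∀ x, μ x ≤ 2 := by
    intro x
    by_contra hgt
    push_neg at hgt
    obtain ⟨a, b, c, ha, hb, hc, hab, hac, hbc⟩ := Finset.two_lt_card_iff.mp hgt
    simp only [Finset.mem_filter] at ha hb hc
    have hdist : ∀ p q : Fin N, p ≠ q → (x - p).val ≠ (x - q).val := by
      intro p q hpq h
      exact hpq (sub_right_injective (Fin.val_injective h))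
    have H : ∀ p q r : Fin N, p ∈ A → q ∈ A → r ∈ A →
        x ∈ R.visited p T → x ∈ R.visited q T → x ∈ R.visited r T →
        (x - q).val < (x - p).val → (x - r).val < (x - q).val → False := by
      intro p q r hp hq hr hxp hxq hxr hpq hqr
      exact no_three R t' x p q r ((hAmem p).1 hp) ((hAmem q).1 hq) ((hAmem r).1 hr)
        hxp hxq hxr hpq hqr
    have nab := hdist a b hab
    have nac := hdist a c hac
    have nbc := hdist b c hbc
    rcases Nat.lt_or_ge (x - a).val (x - b).val with h1 | h1 <;>
      rcases Nat.lt_or_ge (x - b).val (x - c).val with h2 | h2 <;>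
        rcases Nat.lt_or_ge (x - a).val (x - c).val with h3 | h3
    · exact H c b a hc.1 hb.1 ha.1 hc.2 hb.2 ha.2 h2 h1
    · omega
    · exact H b c a hb.1 hc.1 ha.1 hb.2 hc.2 ha.2 (by omega) (by omega)
    · exact H b a c hb.1 ha.1 hc.1 hb.2 ha.2 hc.2 (by omega) (by omega)
    · exact H c a b hc.1 ha.1 hb.1 hc.2 ha.2 hb.2 (by omega) (by omega)
    · exact H a c b ha.1 hc.1 hb.1 ha.2 hc.2 hb.2 (by omega) (by omega)
    · omega
    · exact H a b c ha.1 hb.1 hc.1 ha.2 hb.2 hc.2 (by omega) (by omega)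
  -- step 3 : private points
  have hpriv : ∀ i ∈ A, ∃ p, p ∈ R.visited i T ∧ ∀ j ∈ A, p ∈ R.visited j T → j = i := by
    intro i hi
    have hnr := R.active_nonredundant t' i ((hAmem i).1 hi)
    rw [Set.not_subset] at hnr
    obtain ⟨p, hp1, hp2⟩ := hnr
    refine ⟨p, hp1, ?_⟩
    intro j hj hpj
    by_contra hne
    exact hp2 (Set.mem_biUnion
      (show j ∈ R.active T \ {i} from ⟨(hAmem j).1 hj, hne⟩) hpj)
  choose! p hp1 hp2 using hpriv
  have hpinj : Set.InjOn p A := by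
    intro a ha b hb hab
    exact (hp2 a ha b hb (hab.symm ▸ hp1 b hb)).symm
  set P : Finset (Fin N) := A.image p with hP
  have hPcard : P.card = A.card := Finset.card_image_of_injOn hpinj
  have hμP : ∀ x ∈ P, μ x ≤ 1 := by
    intro x hx
    obtain ⟨i, hi, rfl⟩ := Finset.mem_image.mp hx
    refine Finset.card_le_one.mpr ?_
    intro a ha b hb
    simp only [Finset.mem_filter] at ha hb
    rw [hp2 i hi a ha.1 ha.2, hp2 i hi b hb.1 hb.2]
  -- step 4 : assemble
  have hAcard : (R.active T).ncard = A.card :=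
    Set.ncard_eq_toFinset_card (R.active T) (R.active T).toFinite
  have hANle : A.card ≤ N := by
    simpa using Finset.card_le_univ A
  have hsplit : ∑ x : Fin N, μ x = ∑ x ∈ Finset.univ \ P, μ x + ∑ x ∈ P, μ x :=
    (Finset.sum_sdiff (Finset.subset_univ P)).symm
  have h1 : ∑ x ∈ P, μ x ≤ P.card := by
    calc ∑ x ∈ P, μ x ≤ ∑ _x ∈ P, 1 := Finset.sum_le_sum hμP
      _ = P.card := by simp
  have h2 : ∑ x ∈ Finset.univ \ P, μ x ≤ (Finset.univ \ P).card * 2 := by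
    calc ∑ x ∈ Finset.univ \ P, μ x ≤ ∑ _x ∈ Finset.univ \ P, 2 :=
        Finset.sum_le_sum (fun x _ => hμ2 x)
      _ = (Finset.univ \ P).card * 2 := by simp [Finset.sum_const, Nat.smul_one_eq_cast,
        mul_comm]
    
  have hsd : (Finset.univ \ P).card = N - P.card := by
    rw [Finset.card_sdiff_of_subset (Finset.subset_univ P)]
    simp
  rw [hsum, hAcard, hsplit]
  omega
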